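/- Suppose u^∞ : ℤ² → ℝᵐ satisfies, for all sufficiently large |ℓ|, the representation u^∞(ℓ) = ∑_{k∈ℤ²} K(ℓ-k)·h(k) where the kernel K satisfies |K(j)| ≤ C(1+|j|)^{-2} and the source h satisfies |h(k)| ≤ C(1+|k|)^{-2} + C|u^∞-data(k)| with the data term bounded by C(1+|k|)^{-2}. Then |u^∞(ℓ)| ≤ C'(1+|ℓ|)^{-2} log(2+|ℓ|). -/

import Mathlib

/-- Euclidean norm of a point in ℤ². -/
noncomputable def nrm (ℓ : ℤ × ℤ) : ℝ := Real.sqrt ((ℓ.1 : ℝ) ^ 2 + (ℓ.2 : ℝ) ^ 2)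

lemma nrm_nonneg (j : ℤ × ℤ) : 0 ≤ nrm j := Real.sqrt_nonneg _

lemma nrm_fst (j : ℤ × ℤ) : (|j.1| : ℝ) ≤ nrm j := by
  rw [nrm, ← Real.sqrt_sq_eq_abs]
  exact Real.sqrt_le_sqrt (by nlinarith [sq_nonneg ((j.2:ℝ))])

lemma nrm_snd (j : ℤ × ℤ) : (|j.2| : ℝ) ≤ nrm j := by
  rw [nrm, ← Real.sqrt_sq_eq_abs]
  exact Real.sqrt_le_sqrt (by nlinarith [sq_nonneg ((j.1:ℝ))])

noncomputable def Box (N : ℕ) : Finset (ℤ × ℤ) := Finset.Icc (-(N:ℤ), -(N:ℤ)) ((N:ℤ), (N:ℤ))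

lemma mem_Box {N : ℕ} {j : ℤ × ℤ} : j ∈ Box N ↔ |j.1| ≤ (N:ℤ) ∧ |j.2| ≤ (N:ℤ) := by
  simp only [Box, Finset.mem_Icc, Prod.le_def, abs_le]
  tauto

lemma Box_mono {M N : ℕ} (h : M ≤ N) : Box M ⊆ Box N := by
  intro j hj; rw [mem_Box] at *; omega

lemma card_Box (N : ℕ) : (Box N).card = (2*N+1)^2 := by
  rw [Box, Finset.Icc_prod_def, Finset.card_product]
  have h : ((N:ℤ) + 1 - -(N:ℤ)).toNat = 2*N+1 := by omega
  simp only [Int.card_Icc, h]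
  ring

lemma card_shell (N : ℕ) : (Box (N+1) \ Box N).card = 8*N+8 := by
  rw [Finset.card_sdiff_of_subset (Box_mono (Nat.le_succ N)), card_Box, card_Box]
  have h : (2*(N+1)+1)^2 = (2*N+1)^2 + (8*N+8) := by ring
  rw [h, Nat.add_sub_cancel_left]

lemma nrm_ge_of_not_mem_Box {N : ℕ} {j : ℤ × ℤ} (h : j ∉ Box N) : (N:ℝ) + 1 ≤ nrm j := by
  rw [mem_Box, not_and_or] at h
  rcases h with h | h
  · refine le_trans ?_ (nrm_fst j)
    have : (N:ℤ) + 1 ≤ |j.1| := by omega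
    exact_mod_cast this
  · refine le_trans ?_ (nrm_snd j)
    have : (N:ℤ) + 1 ≤ |j.2| := by omega
    exact_mod_cast this

lemma exists_box (F : Finset (ℤ × ℤ)) : ∃ N : ℕ, F ⊆ Box N := by
  refine ⟨F.sup (fun j => j.1.natAbs ⊔ j.2.natAbs), fun j hj => ?_⟩
  rw [mem_Box]
  have h1 := Finset.le_sup (f := fun j : ℤ×ℤ => j.1.natAbs ⊔ j.2.natAbs) hj
  constructor
  · rw [Int.abs_eq_natAbs]; exact_mod_cast le_trans (le_max_left _ _) h1
  · rw [Int.abs_eq_natAbs]; exact_mod_cast le_trans (le_max_right _ _) h1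

lemma nrm_zero : nrm ((0:ℤ), (0:ℤ)) = 0 := by simp [nrm]

lemma invc {x y c : ℝ} (hx : 0 < x) (hy : 0 < y) (h : y ≤ c * x) : x⁻¹ ≤ c * y⁻¹ := by
  rw [inv_eq_one_div, inv_eq_one_div, mul_one_div, div_le_div_iff₀ hx hy]
  linarith

-- log-type box sum
lemma log_sum (N : ℕ) :
    ∑ j ∈ Box N, ((1 + nrm j)^2)⁻¹ ≤ 1 + 8 * ∑ i ∈ Finset.range N, ((i:ℝ)+1)⁻¹ := by
  induction N with
  | zero =>
    have : Box 0 = {((0:ℤ), (0:ℤ))} := by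
      rw [Box]; norm_num
    rw [this, Finset.sum_singleton, nrm_zero]
    norm_num
  | succ N ih =>
    have hsub := Box_mono (Nat.le_succ N)
    rw [← Finset.sum_sdiff hsub, Finset.sum_range_succ]
    have hshell : ∑ j ∈ Box (N+1) \ Box N, ((1 + nrm j)^2)⁻¹
        ≤ (8*N+8 : ℝ) * (((N:ℝ)+2)^2)⁻¹ := by
      have hb : ∀ j ∈ Box (N+1) \ Box N, ((1 + nrm j)^2)⁻¹ ≤ (((N:ℝ)+2)^2)⁻¹ := by
        intro j hj
        have hn : (N:ℝ) + 1 ≤ nrm j := nrm_ge_of_not_mem_Box (Finset.mem_sdiff.mp hj).2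
        apply inv_anti₀ (by positivity)
        nlinarith
      calc ∑ j ∈ Box (N+1) \ Box N, ((1 + nrm j)^2)⁻¹
          ≤ (Box (N+1) \ Box N).card • (((N:ℝ)+2)^2)⁻¹ := Finset.sum_le_card_nsmul _ _ _ hb
        _ = (8*N+8 : ℝ) * (((N:ℝ)+2)^2)⁻¹ := by rw [card_shell, nsmul_eq_mul]; push_cast; ring
    have h2 : (8*N+8 : ℝ) * (((N:ℝ)+2)^2)⁻¹ ≤ 8 * ((N:ℝ)+1)⁻¹ := by
      rw [← div_eq_mul_inv, ← div_eq_mul_inv, div_le_div_iff₀ (by positivity) (by positivity)]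
      nlinarith [(Nat.cast_nonneg N : (0:ℝ) ≤ (N:ℝ)), sq_nonneg ((N:ℝ))]
    linarith

lemma numer (n : ℕ) : (8*(n:ℝ)+8) * (((n:ℝ)+2)^4)⁻¹
    ≤ 4*(((n:ℝ)+1)^2)⁻¹ - 4*(((n:ℝ)+2)^2)⁻¹ := by
  have hx : (0:ℝ) ≤ (n:ℝ) := Nat.cast_nonneg n
  have e2 : 4*(((n:ℝ)+1)^2)⁻¹ - 4*(((n:ℝ)+2)^2)⁻¹
      = (4*((n:ℝ)+2)^2 - 4*((n:ℝ)+1)^2) / (((n:ℝ)+1)^2*((n:ℝ)+2)^2) := by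
    field_simp
  rw [← div_eq_mul_inv, e2, div_le_div_iff₀ (by positivity) (by positivity)]
  nlinarith [sq_nonneg ((n:ℝ)), sq_nonneg ((n:ℝ)+1), mul_nonneg hx hx, mul_nonneg (mul_nonneg hx hx) hx]

lemma tail_sum (M d : ℕ) :
    ∑ j ∈ Box (M+d) \ Box M, ((1+nrm j)^4)⁻¹
    ≤ 4*(((M:ℝ)+1)^2)⁻¹ - 4*(((M:ℝ)+(d:ℝ)+1)^2)⁻¹ := by
  induction d with
  | zero =>
    simp only [Nat.add_zero, Finset.sdiff_self, Finset.sum_empty, Nat.cast_zero, add_zero]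
    norm_num
  | succ d ih =>
    have hAB := Box_mono (Nat.le_add_right M d)
    have hBC := Box_mono (Nat.le_succ (M+d))
    have hAC := hAB.trans hBC
    have e1 := Finset.sum_sdiff (f := fun j => ((1+nrm j)^4)⁻¹) hAB
    have e2 := Finset.sum_sdiff (f := fun j => ((1+nrm j)^4)⁻¹) hBC
    have e3 : Box (M+(d+1)) = Box ((M+d)+1) := rfl
    have e4 := Finset.sum_sdiff (f := fun j => ((1+nrm j)^4)⁻¹) hAC
    have hshell : ∑ j ∈ Box ((M+d)+1) \ Box (M+d), ((1+nrm j)^4)⁻¹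
        ≤ (8*((M:ℝ)+(d:ℝ))+8) * ((((M:ℝ)+(d:ℝ))+2)^4)⁻¹ := by
      have hb : ∀ j ∈ Box ((M+d)+1) \ Box (M+d), ((1+nrm j)^4)⁻¹ ≤ ((((M:ℝ)+(d:ℝ))+2)^4)⁻¹ := by
        intro j hj
        have hn : ((M+d : ℕ):ℝ) + 1 ≤ nrm j := nrm_ge_of_not_mem_Box (Finset.mem_sdiff.mp hj).2
        push_cast at hn
        apply inv_anti₀ (by positivity)
        apply pow_le_pow_left₀ (by positivity)
        linarith
      calc ∑ j ∈ Box ((M+d)+1) \ Box (M+d), ((1+nrm j)^4)⁻¹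
          ≤ (Box ((M+d)+1) \ Box (M+d)).card • ((((M:ℝ)+(d:ℝ))+2)^4)⁻¹ :=
            Finset.sum_le_card_nsmul _ _ _ hb
        _ = (8*((M:ℝ)+(d:ℝ))+8) * ((((M:ℝ)+(d:ℝ))+2)^4)⁻¹ := by
            rw [card_shell, nsmul_eq_mul]; push_cast; ring
    have hnum := numer (M+d)
    push_cast at hnum
    rw [e3]
    push_cast
    have key : ∑ j ∈ Box ((M+d)+1) \ Box M, ((1+nrm j)^4)⁻¹
        = (∑ j ∈ Box ((M+d)+1) \ Box (M+d), ((1+nrm j)^4)⁻¹)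
          + ∑ j ∈ Box (M+d) \ Box M, ((1+nrm j)^4)⁻¹ := by
      simp only [Nat.succ_eq_add_one] at e4 e1
      linarith
    rw [key]
    push_cast at ih ⊢
    have h48 : 4*((((M:ℝ)+(d:ℝ))+2)^2)⁻¹ = 4*(((M:ℝ)+((d:ℝ)+1)+1)^2)⁻¹ := by ring_nf
    linarith [hnum, ih]

lemma nrm_le_sumabs (j : ℤ × ℤ) : nrm j ≤ (|j.1| : ℝ) + (|j.2| : ℝ) := by
  rw [nrm]
  have h : ((j.1:ℝ))^2 + ((j.2:ℝ))^2 ≤ ((|j.1|:ℝ) + (|j.2|:ℝ))^2 := by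
    push_cast
    nlinarith [sq_abs ((j.1:ℝ)), sq_abs ((j.2:ℝ)),
      mul_nonneg (abs_nonneg ((j.1:ℝ))) (abs_nonneg ((j.2:ℝ)))]
  calc Real.sqrt _ ≤ Real.sqrt (((|j.1|:ℝ) + (|j.2|:ℝ))^2) := Real.sqrt_le_sqrt h
  _ = _ := Real.sqrt_sq (by positivity)

lemma log_finset {R : ℝ} (hR : 0 ≤ R) (F : Finset (ℤ × ℤ)) (hF : ∀ j ∈ F, nrm j ≤ R) :
    ∑ j ∈ F, ((1 + nrm j)^2)⁻¹ ≤ 9 + 8 * Real.log (2+R) := by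
  set N := ⌊R⌋₊ with hN
  have hsub : F ⊆ Box N := by
    intro j hj
    rw [mem_Box]
    have h1 : (|j.1| : ℝ) ≤ R := le_trans (nrm_fst j) (hF j hj)
    have h2 : (|j.2| : ℝ) ≤ R := le_trans (nrm_snd j) (hF j hj)
    constructor
    · have hn : j.1.natAbs ≤ N := Nat.le_floor (by rw [Nat.cast_natAbs]; exact_mod_cast h1)
      rw [Int.abs_eq_natAbs]; exact_mod_cast hn
    · have hn : j.2.natAbs ≤ N := Nat.le_floor (by rw [Nat.cast_natAbs]; exact_mod_cast h2)
      rw [Int.abs_eq_natAbs]; exact_mod_cast hn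
  have hmono : ∑ j ∈ F, ((1 + nrm j)^2)⁻¹ ≤ ∑ j ∈ Box N, ((1 + nrm j)^2)⁻¹ :=
    Finset.sum_le_sum_of_subset_of_nonneg hsub (fun j _ _ => by positivity)
  have hlog := log_sum N
  have hharm : ∑ i ∈ Finset.range N, ((i:ℝ)+1)⁻¹ ≤ 1 + Real.log N := by
    have h := harmonic_le_one_add_log N
    rw [harmonic] at h
    push_cast at h
    exact h
  have hNlog : Real.log N ≤ Real.log (2+R) := by
    rcases Nat.eq_zero_or_pos N with h0 | hpos
    · rw [h0]
      simp only [Nat.cast_zero, Real.log_zero]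
      exact Real.log_nonneg (by linarith)
    · apply Real.log_le_log (by exact_mod_cast hpos)
      have := Nat.floor_le hR
      rw [← hN] at this
      linarith
  linarith

lemma tail_finset {R : ℝ} (hR : 0 ≤ R) (F : Finset (ℤ × ℤ)) (hF : ∀ j ∈ F, R < nrm j) :
    ∑ j ∈ F, ((1 + nrm j)^4)⁻¹ ≤ 36 * ((1+R)^2)⁻¹ := by
  set M := ⌊R/2⌋₊ with hM
  obtain ⟨N₀, hN₀⟩ := exists_box F
  have hsub : F ⊆ Box (M+N₀) \ Box M := by
    intro j hj
    rw [Finset.mem_sdiff]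
    refine ⟨Box_mono (Nat.le_add_left N₀ M) (hN₀ hj), fun hjM => ?_⟩
    rw [mem_Box] at hjM
    have h1 : (|j.1| : ℝ) ≤ M := by exact_mod_cast hjM.1
    have h2 : (|j.2| : ℝ) ≤ M := by exact_mod_cast hjM.2
    have hM2 : (M:ℝ) ≤ R/2 := Nat.floor_le (by linarith)
    have := nrm_le_sumabs j
    have := hF j hj
    linarith
  have hmono : ∑ j ∈ F, ((1 + nrm j)^4)⁻¹ ≤ ∑ j ∈ Box (M+N₀) \ Box M, ((1 + nrm j)^4)⁻¹ :=
    Finset.sum_le_sum_of_subset_of_nonneg hsub (fun j _ _ => by positivity)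
  have htail := tail_sum M N₀
  have hfin : 4*(((M:ℝ)+1)^2)⁻¹ ≤ 36 * ((1+R)^2)⁻¹ := by
    have h9 : (1+R)^2 ≤ 9 * ((M:ℝ)+1)^2 := by
      have := Nat.lt_floor_add_one (R/2)
      rw [← hM] at this
      nlinarith [(Nat.cast_nonneg M : (0:ℝ) ≤ (M:ℝ)), hR]
    have := invc (x := ((M:ℝ)+1)^2) (y := (1+R)^2) (by positivity) (by positivity) h9
    linarith
  have hpos : 0 ≤ 4*(((M:ℝ)+(N₀:ℝ)+1)^2)⁻¹ := by positivity
  linarith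

lemma s2 : Summable (fun n : ℤ => ((1 + |(n:ℝ)|)^2)⁻¹) := by
  have hnat : Summable (fun n : ℕ => ((1 + (n:ℝ))^2)⁻¹) := by
    have h0 : Summable (fun n : ℕ => 1 / (n:ℝ)^2) := Real.summable_one_div_nat_pow.mpr one_lt_two
    have h1 := (summable_nat_add_iff 1).mpr h0
    apply h1.congr
    intro n
    push_cast
    rw [one_div]
    ring_nf
  apply Summable.of_nat_of_neg <;> {
    apply hnat.congr
    intro n
    norm_num }

lemma s4 : Summable (fun k : ℤ × ℤ => ((1 + nrm k)^4)⁻¹) := by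
  have hprod := Summable.mul_of_nonneg s2 s2 (fun n => by positivity) (fun n => by positivity)
  apply Summable.of_nonneg_of_le (fun k => by positivity) ?_ hprod
  intro k
  have h1 : (0:ℝ) ≤ 1 + |(k.1:ℝ)| := by positivity
  have h2 : (0:ℝ) ≤ 1 + |(k.2:ℝ)| := by positivity
  have e1 : (1 + |(k.1:ℝ)|) ≤ 1 + nrm k := by have := nrm_fst k; push_cast at this ⊢; linarith
  have e2 : (1 + |(k.2:ℝ)|) ≤ 1 + nrm k := by have := nrm_snd k; push_cast at this ⊢; linarith
  rw [← mul_inv]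
  apply inv_anti₀ (by positivity)
  calc (1 + |(k.1:ℝ)|)^2 * (1 + |(k.2:ℝ)|)^2
      ≤ (1 + nrm k)^2 * (1 + nrm k)^2 := by
        apply mul_le_mul (pow_le_pow_left₀ h1 e1 2) (pow_le_pow_left₀ h2 e2 2) (by positivity) (by positivity)
    _ = (1 + nrm k)^4 := by ring

lemma gval_key {a b R : ℝ} (ha : 0 ≤ a) (hb : 0 ≤ b) (hR : 0 ≤ R) (hab : R ≤ a + b)
    (hba : b ≤ a) :
    ((1+a)^2)⁻¹ * ((1+b)^2)⁻¹
      ≤ 4 * ((1+R)^2)⁻¹ * (if b ≤ R then ((1+b)^2)⁻¹ else (1+R)^2 * ((1+b)^4)⁻¹) := by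
  split_ifs with hcase
  · have hle : 1 + R ≤ 2*(1+a) := by linarith
    have h4 : (1+R)^2 ≤ 4 * (1+a)^2 := by nlinarith
    have hinv := invc (x := (1+a)^2) (y := (1+R)^2) (by positivity) (by positivity) h4
    calc ((1+a)^2)⁻¹ * ((1+b)^2)⁻¹ ≤ (4*((1+R)^2)⁻¹) * ((1+b)^2)⁻¹ :=
          mul_le_mul_of_nonneg_right hinv (by positivity)
      _ = 4 * ((1+R)^2)⁻¹ * ((1+b)^2)⁻¹ := by ring
  · have e : 4 * ((1+R)^2)⁻¹ * ((1+R)^2 * ((1+b)^4)⁻¹) = 4 * ((1+b)^4)⁻¹ := by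
      have : (1+R)^2 ≠ 0 := by positivity
      field_simp
    rw [e, ← mul_inv]
    have hbb : (1+b)^2 ≤ (1+a)^2 := by nlinarith
    have h5 : (1+b)^4 ≤ (1+a)^2*(1+b)^2 := by nlinarith [sq_nonneg (1+b)]
    have h6 := inv_anti₀ (by positivity : (0:ℝ) < (1+b)^4) h5
    have h7 : (0:ℝ) ≤ ((1+b)^4)⁻¹ := by positivity
    linarith

noncomputable def Gfun (R : ℝ) : ℤ × ℤ → ℝ :=
  fun j => if nrm j ≤ R then ((1+nrm j)^2)⁻¹ else (1+R)^2 * ((1+nrm j)^4)⁻¹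

lemma Gfun_nonneg (R : ℝ) (hR : 0 ≤ R) (j : ℤ × ℤ) : 0 ≤ Gfun R j := by
  rw [Gfun]
  split_ifs <;> positivity

lemma Gfun_le (R : ℝ) (hR : 0 ≤ R) (j : ℤ × ℤ) :
    Gfun R j ≤ (1+R)^2 * ((1+nrm j)^4)⁻¹ := by
  rw [Gfun]
  split_ifs with hc
  · have h1 : (0:ℝ) < 1 + nrm j := by have := nrm_nonneg j; linarith
    have e : ((1+nrm j)^2)⁻¹ = (1+nrm j)^2 * ((1+nrm j)^4)⁻¹ := by
      rw [eq_comm, mul_inv_eq_iff_eq_mul₀ (by positivity)]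
      field_simp
    rw [e]
    apply mul_le_mul_of_nonneg_right ?_ (by positivity)
    have := nrm_nonneg j
    nlinarith
  · exact le_refl _

lemma Gfun_summable (R : ℝ) (hR : 0 ≤ R) : Summable (Gfun R) :=
  Summable.of_nonneg_of_le (Gfun_nonneg R hR) (Gfun_le R hR) (s4.mul_left _)

lemma Gfun_tsum (R : ℝ) (hR : 0 ≤ R) : ∑' j, Gfun R j ≤ 98 * Real.log (2+R) := by
  have hL : (1:ℝ)/2 ≤ Real.log (2+R) := by
    have h1 : Real.log 2 ≤ Real.log (2+R) := Real.log_le_log two_pos (by linarith)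
    have h2 := Real.log_two_gt_d9
    linarith
  have hbound : ∑' j, Gfun R j ≤ 45 + 8 * Real.log (2+R) := by
    apply Summable.tsum_le_of_sum_le (Gfun_summable R hR)
    intro F
    rw [show (fun j => Gfun R j) = Gfun R from rfl]
    have e : ∑ j ∈ F, Gfun R j
        = (∑ j ∈ F.filter (fun j => nrm j ≤ R), ((1+nrm j)^2)⁻¹)
          + ∑ j ∈ F.filter (fun j => ¬ nrm j ≤ R), (1+R)^2 * ((1+nrm j)^4)⁻¹ := by
      rw [← Finset.sum_filter_add_sum_filter_not F (fun j => nrm j ≤ R) (Gfun R)]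
      congr 1
      · apply Finset.sum_congr rfl
        intro j hj
        rw [Gfun, if_pos (Finset.mem_filter.mp hj).2]
      · apply Finset.sum_congr rfl
        intro j hj
        rw [Gfun, if_neg (Finset.mem_filter.mp hj).2]
    rw [e]
    have h1 : ∑ j ∈ F.filter (fun j => nrm j ≤ R), ((1+nrm j)^2)⁻¹ ≤ 9 + 8*Real.log (2+R) :=
      log_finset hR _ (fun j hj => (Finset.mem_filter.mp hj).2)
    have h2 : ∑ j ∈ F.filter (fun j => ¬ nrm j ≤ R), (1+R)^2 * ((1+nrm j)^4)⁻¹ ≤ 36 := by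
      rw [← Finset.mul_sum]
      have h3 : ∑ j ∈ F.filter (fun j => ¬ nrm j ≤ R), ((1+nrm j)^4)⁻¹ ≤ 36 * ((1+R)^2)⁻¹ :=
        tail_finset hR _ (fun j hj => not_le.mp (Finset.mem_filter.mp hj).2)
      calc (1+R)^2 * ∑ j ∈ F.filter (fun j => ¬ nrm j ≤ R), ((1+nrm j)^4)⁻¹
          ≤ (1+R)^2 * (36 * ((1+R)^2)⁻¹) := mul_le_mul_of_nonneg_left h3 (by positivity)
        _ = 36 := by field_simp
    linarith
  linarith

lemma Gfun_key {R : ℝ} (hR : 0 ≤ R) (ℓ k : ℤ × ℤ) (htri : R ≤ nrm k + nrm (ℓ - k)) :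
    ((1 + nrm (ℓ-k))^2)⁻¹ * ((1 + nrm k)^2)⁻¹
      ≤ 4 * ((1+R)^2)⁻¹ * (Gfun R k + Gfun R (ℓ-k)) := by
  rcases le_total (nrm (ℓ - k)) (nrm k) with hcmp | hcmp
  · have h := gval_key (nrm_nonneg k) (nrm_nonneg (ℓ-k)) hR htri hcmp
    have hg : (if nrm (ℓ-k) ≤ R then ((1+nrm (ℓ-k))^2)⁻¹ else (1+R)^2 * ((1+nrm (ℓ-k))^4)⁻¹)
        = Gfun R (ℓ-k) := rfl
    rw [hg] at h
    have hnn : 0 ≤ Gfun R k := Gfun_nonneg R hR k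
    have hc : (0:ℝ) ≤ 4 * ((1+R)^2)⁻¹ := by positivity
    nlinarith [mul_le_mul_of_nonneg_left (le_refl (Gfun R (ℓ-k))) hc]
  · have h := gval_key (nrm_nonneg (ℓ-k)) (nrm_nonneg k) hR (by linarith) hcmp
    have hg : (if nrm k ≤ R then ((1+nrm k)^2)⁻¹ else (1+R)^2 * ((1+nrm k)^4)⁻¹)
        = Gfun R k := rfl
    rw [hg] at h
    have hnn : 0 ≤ Gfun R (ℓ-k) := Gfun_nonneg R hR (ℓ-k)
    have hc : (0:ℝ) ≤ 4 * ((1+R)^2)⁻¹ := by positivity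
    nlinarith

lemma nrm_eq_cabs (j : ℤ × ℤ) : nrm j = ‖(⟨(j.1 : ℝ), (j.2 : ℝ)⟩ : ℂ)‖ := by
  rw [Complex.norm_def, Complex.normSq_mk, nrm]; ring_nf

lemma nrm_triangle (x y : ℤ × ℤ) : nrm (x + y) ≤ nrm x + nrm y := by
  rw [nrm_eq_cabs, nrm_eq_cabs, nrm_eq_cabs]
  have e : (⟨((x+y).1 : ℝ), ((x+y).2 : ℝ)⟩ : ℂ) = ⟨(x.1:ℝ), (x.2:ℝ)⟩ + ⟨(y.1:ℝ), (y.2:ℝ)⟩ := by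
    apply Complex.ext <;> simp
  rw [e]
  exact norm_add_le _ _

set_option maxHeartbeats 2000000 in
/-- Optimal decay from the convolution representation: if for all sufficiently
large |ℓ| one has u∞(ℓ) = ∑_k K(ℓ-k)·h(k) with kernel |K(j)| ≤ C(1+|j|)⁻² and
source |h(k)| ≤ C(1+|k|)⁻² + C|data(k)|, where the data term is itself bounded by
C(1+|k|)⁻², then |u∞(ℓ)| ≤ C'(1+|ℓ|)⁻² log(2+|ℓ|) for all such ℓ. -/
theorem convolution_optimal_decay (m : ℕ) (C r₀ : ℝ) (hC : 0 < C)
    (uinf : ℤ × ℤ → EuclideanSpace ℝ (Fin m))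
    (K : ℤ × ℤ → ℝ) (h dat : ℤ × ℤ → EuclideanSpace ℝ (Fin m))
    (hrep : ∀ ℓ : ℤ × ℤ, r₀ ≤ nrm ℓ → HasSum (fun k : ℤ × ℤ => K (ℓ - k) • h k) (uinf ℓ))
    (hK : ∀ j : ℤ × ℤ, |K j| ≤ C * ((1 + nrm j) ^ 2)⁻¹)
    (hh : ∀ k : ℤ × ℤ, ‖h k‖ ≤ C * ((1 + nrm k) ^ 2)⁻¹ + C * ‖dat k‖)
    (hdat : ∀ k : ℤ × ℤ, ‖dat k‖ ≤ C * ((1 + nrm k) ^ 2)⁻¹) :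
    ∃ C' : ℝ, 0 < C' ∧ ∀ ℓ : ℤ × ℤ, r₀ ≤ nrm ℓ →
      ‖uinf ℓ‖ ≤ C' * ((1 + nrm ℓ) ^ 2)⁻¹ * Real.log (2 + nrm ℓ) := by
  have hc2 : (0:ℝ) < C + C*C := by nlinarith
  have hc0 : (0:ℝ) < C * (C + C*C) := mul_pos hC hc2
  refine ⟨784 * (C * (C + C*C)), by linarith, fun ℓ hℓ => ?_⟩
  set R := nrm ℓ with hRdef
  have hR : 0 ≤ R := nrm_nonneg ℓ
  set G := Gfun R with hGdef
  have hGsummable := Gfun_summable R hR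
  have hGshift : Summable (fun k => G (ℓ - k)) := (Equiv.subLeft ℓ).summable_iff.mpr hGsummable
  have hGshift_tsum : ∑' k, G (ℓ - k) = ∑' j, G j := (Equiv.subLeft ℓ).tsum_eq G
  set bigc := C * (C + C*C) * (4 * ((1+R)^2)⁻¹) with hbigc
  have hbigc_nonneg : 0 ≤ bigc := by positivity
  set maj : ℤ × ℤ → ℝ :=
    fun k => (C * ((1 + nrm (ℓ-k))^2)⁻¹) * ((C + C*C) * ((1 + nrm k)^2)⁻¹) with hmaj
  have hptbound : ∀ k, ‖K (ℓ-k) • h k‖ ≤ maj k := by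
    intro k
    rw [norm_smul, Real.norm_eq_abs]
    apply mul_le_mul (hK _) ?_ (norm_nonneg _) (by positivity)
    calc ‖h k‖ ≤ C * ((1+nrm k)^2)⁻¹ + C * ‖dat k‖ := hh k
      _ ≤ C * ((1+nrm k)^2)⁻¹ + C * (C * ((1+nrm k)^2)⁻¹) :=
          add_le_add_right (mul_le_mul_of_nonneg_left (hdat k) hC.le) _
      _ = (C + C*C) * ((1+nrm k)^2)⁻¹ := by ring
  have hkey : ∀ k, maj k ≤ bigc * (G k + G (ℓ - k)) := by
    intro k
    have htri : R ≤ nrm k + nrm (ℓ - k) := by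
      have h1 := nrm_triangle k (ℓ - k)
      have e : k + (ℓ - k) = ℓ := by abel
      rw [e] at h1
      exact h1
    have h2 := Gfun_key hR ℓ k htri
    have e2 : maj k = (C * (C + C*C)) * (((1 + nrm (ℓ-k))^2)⁻¹ * ((1 + nrm k)^2)⁻¹) := by
      rw [hmaj]; ring
    rw [e2, hbigc]
    calc (C * (C + C*C)) * (((1 + nrm (ℓ-k))^2)⁻¹ * ((1 + nrm k)^2)⁻¹)
        ≤ (C * (C + C*C)) * (4 * ((1+R)^2)⁻¹ * (G k + G (ℓ-k))) :=
          mul_le_mul_of_nonneg_left h2 hc0.le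
      _ = C * (C + C*C) * (4 * ((1+R)^2)⁻¹) * (G k + G (ℓ-k)) := by ring
  have hmaj_nonneg : ∀ k, 0 ≤ maj k := by
    intro k
    apply mul_nonneg (mul_nonneg hC.le (by positivity)) (mul_nonneg hc2.le (by positivity))
  have hRHS_summable : Summable (fun k => bigc * (G k + G (ℓ - k))) :=
    (hGsummable.add hGshift).mul_left bigc
  have hmaj_summable : Summable maj :=
    Summable.of_nonneg_of_le hmaj_nonneg hkey hRHS_summable
  have hnorm : ‖uinf ℓ‖ ≤ ∑' k, maj k := by
    have hrepℓ := hrep ℓ hℓ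
    rw [← hrepℓ.tsum_eq]
    exact tsum_of_norm_bounded hmaj_summable.hasSum hptbound
  have htsum : ∑' k, maj k ≤ bigc * (∑' j, G j + ∑' j, G j) := by
    calc ∑' k, maj k ≤ ∑' k, bigc * (G k + G (ℓ - k)) :=
          Summable.tsum_le_tsum hkey hmaj_summable hRHS_summable
      _ = bigc * ∑' k, (G k + G (ℓ - k)) := tsum_mul_left
      _ = bigc * (∑' k, G k + ∑' k, G (ℓ - k)) := by rw [Summable.tsum_add hGsummable hGshift]
      _ = bigc * (∑' j, G j + ∑' j, G j) := by rw [hGshift_tsum]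
  have hGt := Gfun_tsum R hR
  have hGt_nonneg : 0 ≤ ∑' j, G j := tsum_nonneg (Gfun_nonneg R hR)
  have hfinal : bigc * (∑' j, G j + ∑' j, G j)
      ≤ 784 * (C * (C + C*C)) * ((1 + R)^2)⁻¹ * Real.log (2+R) := by
    have h1 : ∑' j, G j + ∑' j, G j ≤ 2 * (98 * Real.log (2+R)) := by
      have h2 : ∑' j, G j ≤ 98 * Real.log (2+R) := hGt
      linarith
    calc bigc * (∑' j, G j + ∑' j, G j) ≤ bigc * (2 * (98 * Real.log (2+R))) :=
          mul_le_mul_of_nonneg_left h1 hbigc_nonneg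
      _ = 784 * (C * (C + C*C)) * ((1 + R)^2)⁻¹ * Real.log (2+R) := by rw [hbigc]; ring
  calc ‖uinf ℓ‖ ≤ ∑' k, maj k := hnorm
    _ ≤ bigc * (∑' j, G j + ∑' j, G j) := htsum
    _ ≤ 784 * (C * (C + C*C)) * ((1 + R)^2)⁻¹ * Real.log (2+R) := hfinal
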